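/- For a finite group G, the enhanced power graph P_e(G) equals the order super enhanced power graph P_e^o(G) if and only if G is cyclic. -/

import Mathlib

/-- The power graph of a group `G`: distinct `x, y` are adjacent iff one is a power
of the other, i.e. `x ∈ ⟨y⟩` or `y ∈ ⟨x⟩`. -/
def powerGraph (G : Type*) [Group G] : SimpleGraph G :=
  SimpleGraph.fromRel (fun x y => x ∈ Subgroup.zpowers y)

/-- The enhanced power graph of a group `G`: distinct `x, y` are adjacent iff they lie
in a common cyclic subgroup. -/
def enhancedPowerGraph (G : Type*) [Group G] : SimpleGraph G :=
  SimpleGraph.fromRel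
    (fun x y => ∃ z : G, x ∈ Subgroup.zpowers z ∧ y ∈ Subgroup.zpowers z)

/-- The commuting graph of a group `G`: distinct `x, y` are adjacent iff they commute. -/
def commutingGraph (G : Type*) [Group G] : SimpleGraph G :=
  SimpleGraph.fromRel (fun x y => x * y = y * x)

/-- The order super graph of a graph `A` on a group `G`: distinct `x, y` are adjacent iff
they have the same order, or some elements of the same orders are adjacent in `A`. -/
def orderSuper (G : Type*) [Group G] (A : SimpleGraph G) : SimpleGraph G :=
  SimpleGraph.fromRel (fun x y =>
    orderOf x = orderOf y ∨
      ∃ x' y' : G, orderOf x' = orderOf x ∧ orderOf y' = orderOf y ∧ A.Adj x' y')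

/-- The conjugacy super graph of a graph `A` on a group `G`: distinct `x, y` are adjacent
iff they are conjugate, or some conjugates of them are adjacent in `A`. -/
def conjSuper (G : Type*) [Group G] (A : SimpleGraph G) : SimpleGraph G :=
  SimpleGraph.fromRel (fun x y =>
    IsConj x y ∨ ∃ x' y' : G, IsConj x x' ∧ IsConj y y' ∧ A.Adj x' y')

/-- A vertex of a simple graph is dominant if it is adjacent to every other vertex. -/
def IsDominantVertex {V : Type*} (Γ : SimpleGraph V) (v : V) : Prop :=
  ∀ w, w ≠ v → Γ.Adj v w

open Subgroup Finset Nat in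
lemma aux_mem_zpowers_of_orderOf_eq {G : Type*} [Group G] [Fintype G] {z a b : G}
    (ha : a ∈ Subgroup.zpowers z) (hb : b ∈ Subgroup.zpowers z)
    (h : orderOf a = orderOf b) : b ∈ Subgroup.zpowers a := by
  obtain ⟨m, hm⟩ := mem_powers_iff_mem_zpowers.2 ha
  obtain ⟨k, hk⟩ := mem_powers_iff_mem_zpowers.2 hb
  replace hm : z ^ m = a := hm
  replace hk : z ^ k = b := hk
  set N := orderOf z with hN
  have hN0 : N ≠ 0 := (orderOf_pos z).ne'
  have hoa : orderOf a = N / Nat.gcd N m := by rw [← hm, orderOf_pow]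
  have hob : orderOf b = N / Nat.gcd N k := by rw [← hk, orderOf_pow]
  have hgg : Nat.gcd N m = Nat.gcd N k := by
    have h1 : N / Nat.gcd N m = N / Nat.gcd N k := by rw [← hoa, ← hob, h]
    calc Nat.gcd N m = N / (N / Nat.gcd N m) :=
          (Nat.div_div_self (Nat.gcd_dvd_left N m) hN0).symm
      _ = N / (N / Nat.gcd N k) := by rw [h1]
      _ = Nat.gcd N k := Nat.div_div_self (Nat.gcd_dvd_left N k) hN0
  have hzg : z ^ (Nat.gcd N m) ∈ Subgroup.zpowers a := by
    refine ⟨Nat.gcdA m N, ?_⟩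
    have hzN : z ^ (N : ℤ) = 1 := by
      rw [zpow_natCast]; exact pow_orderOf_eq_one z
    have : (z ^ (Nat.gcd N m) : G) = z ^ ((Nat.gcd m N : ℤ)) := by
      rw [Nat.gcd_comm N m, zpow_natCast]
    rw [this, Nat.gcd_eq_gcd_ab m N, zpow_add, zpow_mul, zpow_mul, hzN, one_zpow, mul_one,
      ← hm, ← zpow_natCast z m]
  have hd : Nat.gcd N k ∣ k := Nat.gcd_dvd_right N k
  have : b = (z ^ Nat.gcd N m) ^ (k / Nat.gcd N k) := by
    rw [hgg, ← pow_mul, Nat.mul_div_cancel' hd, hk]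
  rw [this]
  exact Subgroup.pow_mem _ hzg _

open Subgroup Finset Nat in
lemma aux_isCyclic_of_key {G : Type*} [Group G] [Fintype G]
    (key : ∀ a b : G, orderOf a = orderOf b → b ∈ Subgroup.zpowers a) : IsCyclic G := by
  classical
  apply isCyclic_of_card_pow_eq_one_le
  intro n hn
  have hsum := sum_card_orderOf_eq_card_pow_eq_one (G := G) (n := n) hn.ne'
  rw [← hsum]
  calc (∑ d ∈ n.divisors, #{a : G | orderOf a = d})
      ≤ ∑ d ∈ n.divisors, φ d := by
        refine Finset.sum_le_sum fun d _ => ?_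
        rcases Finset.eq_empty_or_nonempty ({a : G | orderOf a = d} : Finset G) with hE | ⟨a, haf⟩
        · simp [hE]
        have ha : orderOf a = d := (Finset.mem_filter.1 haf).2
        have hcyc : IsCyclic ↥(Subgroup.zpowers a) := by
          refine ⟨⟨a, Subgroup.mem_zpowers a⟩, fun x => ?_⟩
          obtain ⟨i, hi⟩ := x.2
          exact ⟨i, Subtype.ext (by simpa using hi)⟩
        have hdvd : d ∣ Fintype.card ↥(Subgroup.zpowers a) := by
          rw [Fintype.card_zpowers, ha]
        have hcard : #{b : ↥(Subgroup.zpowers a) | orderOf b = d} = φ d :=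
          IsCyclic.card_orderOf_eq_totient hdvd
        rw [← hcard]
        refine Finset.card_le_card_of_injOn
          (f := fun b : G => if hb : b ∈ Subgroup.zpowers a
            then (⟨b, hb⟩ : ↥(Subgroup.zpowers a)) else 1) (fun b hbf => ?_) ?_
        · have hb : orderOf b = d := (Finset.mem_filter.1 hbf).2
          have hmem : b ∈ Subgroup.zpowers a := key a b (ha.trans hb.symm)
          dsimp only
          rw [dif_pos hmem]
          simp [Finset.mem_filter, hb]
        · intro b1 h1 b2 h2 heq
          have hm1 : b1 ∈ Subgroup.zpowers a :=
            key a b1 (ha.trans ((Finset.mem_filter.1 h1).2).symm)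
          have hm2 : b2 ∈ Subgroup.zpowers a :=
            key a b2 (ha.trans ((Finset.mem_filter.1 h2).2).symm)
          dsimp only at heq
          rw [dif_pos hm1, dif_pos hm2] at heq
          simpa using congrArg Subtype.val heq
    _ = n := Nat.sum_totient n

/-- For a finite group `G`, the enhanced power graph equals the order super enhanced
power graph iff `G` is cyclic. -/
theorem enhancedPowerGraph_eq_orderSuper_iff_isCyclic (G : Type*) [Group G] [Fintype G] :
    enhancedPowerGraph G = orderSuper G (enhancedPowerGraph G) ↔ IsCyclic G := by
  constructor
  · intro h
    refine aux_isCyclic_of_key (fun a b hab => ?_)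
    by_cases hba : b = a
    · subst hba; exact Subgroup.mem_zpowers b
    · have hadj : (orderSuper G (enhancedPowerGraph G)).Adj a b :=
        (SimpleGraph.fromRel_adj _ _ _).2 ⟨fun he => hba he.symm, Or.inl (Or.inl hab)⟩
      rw [← h] at hadj
      obtain ⟨-, ⟨z, h1, h2⟩ | ⟨z, h1, h2⟩⟩ := (SimpleGraph.fromRel_adj _ _ _).1 hadj
      · exact aux_mem_zpowers_of_orderOf_eq h1 h2 hab
      · exact aux_mem_zpowers_of_orderOf_eq h2 h1 hab
  · intro hG
    obtain ⟨g, hg⟩ := IsCyclic.exists_generator (α := G)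
    have h1 : enhancedPowerGraph G = ⊤ := by
      ext x y
      rw [SimpleGraph.top_adj]
      constructor
      · exact fun h => ((SimpleGraph.fromRel_adj _ _ _).1 h).1
      · exact fun hne => (SimpleGraph.fromRel_adj _ _ _).2 ⟨hne, Or.inl ⟨g, hg x, hg y⟩⟩
    have h2 : orderSuper G (enhancedPowerGraph G) = ⊤ := by
      ext x y
      rw [SimpleGraph.top_adj]
      constructor
      · exact fun h => ((SimpleGraph.fromRel_adj _ _ _).1 h).1
      · intro hne
        exact (SimpleGraph.fromRel_adj _ _ _).2
          ⟨hne, Or.inl (Or.inr ⟨x, y, rfl, rfl, by rw [h1]; exact (SimpleGraph.top_adj _ _).2 hne⟩)⟩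
    rw [h2, h1]
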